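/- (Comparison of dichotomies: majorization is equivalent to zonotope inclusion.) Let A be a 2×n row-stochastic matrix and B a 2×m row-stochastic matrix. Then there exists an n×m row-stochastic matrix M with A M = B if and only if Z(B) ⊆ Z(A), where Z(A) = {Σⱼ δⱼ aⱼ : δ ∈ [0,1]ⁿ} is the zonotope of A (with columns aⱼ) and Z(B) = {Σⱼ εⱼ bⱼ : ε ∈ [0,1]ᵐ} is the zonotope of B (with columns bⱼ). -/

import Mathlib

open Matrix Finset

/-- A real matrix is row-stochastic if it has nonnegative entries and each row sums to 1. -/
def RowStochastic {n m : ℕ} (A : Matrix (Fin n) (Fin m) ℝ) : Prop :=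
  (∀ i j, 0 ≤ A i j) ∧ ∀ i, ∑ j, A i j = 1

/-- The zonotope of a `2 × n` matrix `A`: all combinations `∑ⱼ δⱼ aⱼ` of the columns `aⱼ`
of `A` with coefficients `δⱼ ∈ [0,1]`; equivalently the Minkowski sum of the segments
`conv(0, aⱼ)`. -/
def zonotope {n : ℕ} (A : Matrix (Fin 2) (Fin n) ℝ) : Set (Fin 2 → ℝ) :=
  {z | ∃ δ : Fin n → ℝ, (∀ j, δ j ∈ Set.Icc (0 : ℝ) 1) ∧
    z = ∑ j : Fin n, δ j • (fun i : Fin 2 => A i j)}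

lemma sup'_mul_left {ι : Type*} (K : Finset ι) (hK : K.Nonempty) (f : ι → ℝ) (w : ℝ) (hw : 0 ≤ w) :
    w * K.sup' hK f = K.sup' hK fun k => w * f k := by
  obtain ⟨k₀, hk₀, hk₀eq⟩ := Finset.exists_mem_eq_sup' hK f
  apply le_antisymm
  · rw [hk₀eq]
    exact Finset.le_sup' (fun k => w * f k) hk₀
  · exact Finset.sup'_le _ _ fun k hk => mul_le_mul_of_nonneg_left (Finset.le_sup' f hk) hw

lemma continuous_affine_sup' {ι : Type*} (K : Finset ι) (hK : K.Nonempty) (α β : ι → ℝ) :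
    Continuous fun t : ℝ => K.sup' hK fun k => α k * t + β k := by
  induction hK using Finset.Nonempty.cons_induction with
  | singleton a => simpa using (by fun_prop : Continuous fun t : ℝ => α a * t + β a)
  | cons a s ha hs ih =>
    have : (fun t : ℝ => (Finset.cons a s ha).sup' (Finset.cons_nonempty ha) fun k => α k * t + β k)
        = fun t : ℝ => max (α a * t + β a) (s.sup' hs fun k => α k * t + β k) := by
      funext t; rw [Finset.sup'_cons hs]
    rw [this]
    exact ((continuous_const.mul continuous_id).add continuous_const).max ih

lemma mul_max0 (w u : ℝ) (hw : 0 ≤ w) : w * max u 0 = max (w * u) 0 := by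
  rcases le_total u 0 with h | h
  · rw [max_eq_right h, max_eq_right (mul_nonpos_of_nonneg_of_nonpos hw h), mul_zero]
  · rw [max_eq_left h, max_eq_left (mul_nonneg hw h)]

lemma max_sub_max_aux (s t r : ℝ) (hst : s ≤ t) :
    max (t - max r s) 0 = max (t - r) 0 - max (s - r) 0 := by
  rcases le_total r s with h | h
  · rw [max_eq_right h, max_eq_left (by linarith : (0:ℝ) ≤ t - s),
      max_eq_left (by linarith : (0:ℝ) ≤ t - r), max_eq_left (by linarith : (0:ℝ) ≤ s - r)]
    ring
  · rw [max_eq_left h, max_eq_right (by linarith : s - r ≤ 0), sub_zero]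

lemma hinge_rep {ι : Type*} [DecidableEq ι] (α β : ι → ℝ) (K : Finset ι) :
    ∀ (hK : K.Nonempty), ∃ k₁ ∈ K, ∃ (N : ℕ) (c sp : Fin N → ℝ),
      (∀ i, 0 ≤ c i) ∧
      ∀ t, K.sup' hK (fun k => α k * t + β k)
        = α k₁ * t + β k₁ + ∑ i, c i * max (t - sp i) 0 := by
  induction K using Finset.strongInduction with
  | _ K ih =>
  intro hK
  obtain ⟨k₀, hk₀, hmin⟩ := Finset.exists_min_image K α hK
  rcases (K.erase k₀).eq_empty_or_nonempty with hKe | hK'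
  · -- K = {k₀}
    have hKs : K = {k₀} := by
      rcases (Finset.erase_eq_empty_iff K k₀).mp hKe with h | h
      · exact absurd h (Finset.nonempty_iff_ne_empty.mp hK)
      · exact h
    subst hKs
    refine ⟨k₀, Finset.mem_singleton_self k₀, 0, (fun i => i.elim0), (fun i => i.elim0),
      (fun i => i.elim0), fun t => ?_⟩
    simp [Finset.sup'_singleton]
  · set K' := K.erase k₀ with hK'def
    obtain ⟨k₁, hk₁, N, c, sp, hc, hrep⟩ := ih K' (Finset.erase_ssubset hk₀) hK'
    have hk₁K : k₁ ∈ K := Finset.mem_of_mem_erase hk₁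
    set L : ℝ → ℝ := fun t => α k₀ * t + β k₀ with hLdef
    set ψ : ℝ → ℝ := fun t => K'.sup' hK' (fun k => α k * t + β k) with hψdef
    have hsup : ∀ t, K.sup' hK (fun k => α k * t + β k) = max (L t) (ψ t) := by
      intro t
      have h1 : K = insert k₀ K' := (Finset.insert_erase hk₀).symm
      have h2 : K.sup' hK (fun k => α k * t + β k)
          = (insert k₀ K').sup' (h1 ▸ hK) (fun k => α k * t + β k) :=
        Finset.sup'_congr hK h1 (fun _ _ => rfl)
      rw [h2, Finset.sup'_insert hK']
    have hmono : ∀ t t' : ℝ, t ≤ t' → ψ t - L t ≤ ψ t' - L t' := by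
      intro t t' htt
      obtain ⟨k₂, hk₂, hk₂eq⟩ := Finset.exists_mem_eq_sup' hK' (fun k => α k * t + β k)
      have hk₂K : k₂ ∈ K := Finset.mem_of_mem_erase hk₂
      have hα : α k₀ ≤ α k₂ := hmin k₂ hk₂K
      have h1 : ψ t = α k₂ * t + β k₂ := hk₂eq
      have h2 : α k₂ * t' + β k₂ ≤ ψ t' := Finset.le_sup' (fun k => α k * t' + β k) hk₂
      simp only [hLdef]
      nlinarith
    by_cases hcaseA : ∀ t, L t ≤ ψ t
    · refine ⟨k₁, hk₁K, N, c, sp, hc, fun t => ?_⟩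
      rw [hsup t, max_eq_right (hcaseA t)]
      exact hrep t
    by_cases hcaseB : ∀ t, ψ t ≤ L t
    · refine ⟨k₀, hk₀, 0, (fun i => i.elim0), (fun i => i.elim0), (fun i => i.elim0), fun t => ?_⟩
      rw [hsup t, max_eq_left (hcaseB t)]
      simp [hLdef]
    · push_neg at hcaseA hcaseB
      obtain ⟨tb, htb⟩ := hcaseA   -- ψ tb < L tb
      obtain ⟨ta, hta⟩ := hcaseB   -- L ta < ψ ta
      have htba : tb ≤ ta := by
        by_contra hcon
        push_neg at hcon
        have := hmono ta tb hcon.le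
        linarith
      have hDcont : ContinuousOn (fun t => ψ t - L t) (Set.Icc tb ta) :=
        ((continuous_affine_sup' K' hK' α β).sub
          ((continuous_const.mul continuous_id).add continuous_const)).continuousOn
      have h0mem : (0:ℝ) ∈ Set.Icc (ψ tb - L tb) (ψ ta - L ta) :=
        ⟨by linarith, by linarith⟩
      obtain ⟨s, hsmem, hs0⟩ := intermediate_value_Icc htba hDcont h0mem
      have hψs : ψ s = L s := by dsimp at hs0; linarith
      refine ⟨k₀, hk₀, N + 1, Fin.cons (α k₁ - α k₀) c, Fin.cons s (fun i => max (sp i) s),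
        ?_, fun t => ?_⟩
      · intro i
        refine Fin.cases ?_ ?_ i
        · simpa using sub_nonneg.mpr (hmin k₁ hk₁K)
        · intro j; simpa using hc j
      · rw [hsup t]
        rw [Fin.sum_univ_succ]
        simp only [Fin.cons_zero, Fin.cons_succ]
        rcases le_total t s with hts | hst
        · have hψt : ψ t ≤ L t := by have := hmono t s hts; linarith
          rw [max_eq_left hψt]
          have hz : max (t - s) 0 = 0 := max_eq_right (by linarith)
          have hz2 : ∀ i : Fin N, max (t - max (sp i) s) 0 = 0 := fun i =>
            max_eq_right (by have := le_max_right (sp i) s; linarith)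
          simp only [hz, hz2, mul_zero, Finset.sum_const_zero]
          simp [hLdef]
        · have hLt : L t ≤ ψ t := by have := hmono s t hst; linarith
          rw [max_eq_right hLt]
          have hz : max (t - s) 0 = t - s := max_eq_left (by linarith)
          have hsum : ∑ i : Fin N, c i * max (t - max (sp i) s) 0
              = (∑ i, c i * max (t - sp i) 0) - ∑ i, c i * max (s - sp i) 0 := by
            rw [← Finset.sum_sub_distrib]
            refine Finset.sum_congr rfl fun i _ => ?_
            rw [max_sub_max_aux s t (sp i) hst]
            ring
          rw [hz, hsum]
          have h1 := hrep t
          have h2 := hrep s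
          simp only [hLdef] at hψs ⊢
          linarith

lemma key_ineq {n m : ℕ} (A : Matrix (Fin 2) (Fin n) ℝ) (B : Matrix (Fin 2) (Fin m) ℝ)
    (hA1 : ∀ i j, 0 ≤ A i j) (hA2 : ∀ i, ∑ j, A i j = 1)
    (hB1 : ∀ i k, 0 ≤ B i k) (hB2 : ∀ i, ∑ k, B i k = 1)
    (hsub : ∀ u : Fin 2 → ℝ, ∑ k, max (∑ i, u i * B i k) 0 ≤ ∑ j, max (∑ i, u i * A i j) 0)
    (y : Fin m → Fin 2 → ℝ) (hne : (Finset.univ : Finset (Fin m)).Nonempty) :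
    ∑ k, ∑ i, y k i * B i k ≤ ∑ j, Finset.univ.sup' hne (fun k => ∑ i, y k i * A i j) := by
  obtain ⟨k₁, -, N, c, sp, hc, hrep⟩ :=
    hinge_rep (fun k => y k 0 - y k 1) (fun k => y k 1) Finset.univ hne
  set a : ℝ := y k₁ 0 - y k₁ 1 with ha
  set b : ℝ := y k₁ 1 with hb
  -- quadrant representation
  have hG : ∀ x0 x1 : ℝ, 0 ≤ x0 → 0 ≤ x1 →
      Finset.univ.sup' hne (fun k => y k 0 * x0 + y k 1 * x1)
        = a * x0 + b * (x0 + x1) + ∑ i, c i * max (x0 - sp i * (x0 + x1)) 0 := by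
    intro x0 x1 h0 h1
    rcases eq_or_lt_of_le (add_nonneg h0 h1) with hw | hw
    · have hx0 : x0 = 0 := by linarith
      have hx1 : x1 = 0 := by linarith
      subst hx0; subst hx1
      have hz : (fun k : Fin m => y k 0 * 0 + y k 1 * 0) = fun _ => (0:ℝ) := by
        funext k; ring
      rw [hz, Finset.sup'_const]
      simp
    · set w : ℝ := x0 + x1 with hwdef
      have hwne : w ≠ 0 := ne_of_gt hw
      have ht : w * (x0 / w) = x0 := by field_simp
      have hLHS : (fun k : Fin m => y k 0 * x0 + y k 1 * x1)
          = fun k => w * ((y k 0 - y k 1) * (x0 / w) + y k 1) := by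
        funext k; field_simp; ring
      rw [hLHS, ← sup'_mul_left Finset.univ hne _ w hw.le, hrep (x0 / w)]
      have hterm : ∀ i : Fin N, w * (c i * max (x0 / w - sp i) 0)
          = c i * max (x0 - sp i * w) 0 := by
        intro i
        rw [show w * (c i * max (x0 / w - sp i) 0) = c i * (w * max (x0 / w - sp i) 0) by ring,
          mul_max0 _ _ hw.le, mul_sub, ht, mul_comm w (sp i)]
      have hsum : ∑ i, w * (c i * max (x0 / w - sp i) 0)
          = ∑ i, c i * max (x0 - sp i * w) 0 :=
        Finset.sum_congr rfl fun i _ => hterm i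
      rw [mul_add, mul_add, Finset.mul_sum, hsum]
      have h1 : w * (a * (x0 / w)) = a * x0 := by field_simp
      have h2 : w * b = b * (x0 + x1) := by rw [hwdef]; ring
      rw [h1, h2]
  -- expansion of sums of G over columns
  have expand : ∀ {p : ℕ} (C : Matrix (Fin 2) (Fin p) ℝ),
      ∑ q, (a * C 0 q + b * (C 0 q + C 1 q) + ∑ i, c i * max (C 0 q - sp i * (C 0 q + C 1 q)) 0)
        = a * (∑ q, C 0 q) + b * ((∑ q, C 0 q) + (∑ q, C 1 q))
          + ∑ i, c i * ∑ q, max (C 0 q - sp i * (C 0 q + C 1 q)) 0 := by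
    intro p C
    rw [Finset.sum_add_distrib, Finset.sum_add_distrib, ← Finset.mul_sum,
      ← Finset.mul_sum, Finset.sum_add_distrib, Finset.sum_comm]
    congr 1
    exact Finset.sum_congr rfl fun i _ => (Finset.mul_sum _ _ _).symm
  have step1 : ∑ k, ∑ i, y k i * B i k
      ≤ ∑ k, Finset.univ.sup' hne (fun κ => y κ 0 * B 0 k + y κ 1 * B 1 k) := by
    refine Finset.sum_le_sum fun k _ => ?_
    rw [Fin.sum_univ_two]
    exact Finset.le_sup' (fun κ => y κ 0 * B 0 k + y κ 1 * B 1 k) (Finset.mem_univ k)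
  have step2 : ∑ k, Finset.univ.sup' hne (fun κ => y κ 0 * B 0 k + y κ 1 * B 1 k)
      = a * (∑ k, B 0 k) + b * ((∑ k, B 0 k) + (∑ k, B 1 k))
        + ∑ i, c i * ∑ k, max (B 0 k - sp i * (B 0 k + B 1 k)) 0 := by
    rw [← expand B]
    exact Finset.sum_congr rfl fun k _ => hG (B 0 k) (B 1 k) (hB1 0 k) (hB1 1 k)
  have step3 : ∑ j, Finset.univ.sup' hne (fun k => ∑ i, y k i * A i j)
      = a * (∑ j, A 0 j) + b * ((∑ j, A 0 j) + (∑ j, A 1 j))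
        + ∑ i, c i * ∑ j, max (A 0 j - sp i * (A 0 j + A 1 j)) 0 := by
    rw [← expand A]
    refine Finset.sum_congr rfl fun j _ => ?_
    rw [← hG (A 0 j) (A 1 j) (hA1 0 j) (hA1 1 j)]
    exact Finset.sup'_congr hne rfl fun k _ => by rw [Fin.sum_univ_two]
  have step4 : ∀ i : Fin N, ∑ k, max (B 0 k - sp i * (B 0 k + B 1 k)) 0
      ≤ ∑ j, max (A 0 j - sp i * (A 0 j + A 1 j)) 0 := by
    intro i
    have := hsub (fun i' => if i' = 0 then 1 - sp i else - sp i)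
    have hBeq : ∀ k, (∑ i', (if i' = (0:Fin 2) then 1 - sp i else - sp i) * B i' k)
        = B 0 k - sp i * (B 0 k + B 1 k) := by
      intro k; rw [Fin.sum_univ_two]; norm_num; ring
    have hAeq : ∀ j, (∑ i', (if i' = (0:Fin 2) then 1 - sp i else - sp i) * A i' j)
        = A 0 j - sp i * (A 0 j + A 1 j) := by
      intro j; rw [Fin.sum_univ_two]; norm_num; ring
    simp only [hBeq, hAeq] at this
    exact this
  calc ∑ k, ∑ i, y k i * B i k
      ≤ a * (∑ k, B 0 k) + b * ((∑ k, B 0 k) + (∑ k, B 1 k))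
        + ∑ i, c i * ∑ k, max (B 0 k - sp i * (B 0 k + B 1 k)) 0 := by
        rw [← step2]; exact step1
    _ ≤ a * (∑ j, A 0 j) + b * ((∑ j, A 0 j) + (∑ j, A 1 j))
        + ∑ i, c i * ∑ j, max (A 0 j - sp i * (A 0 j + A 1 j)) 0 := by
        rw [hB2 0, hB2 1, hA2 0, hA2 1]
        gcongr with i hi
        · exact hc i
        · exact step4 i
    _ = ∑ j, Finset.univ.sup' hne (fun k => ∑ i, y k i * A i j) := step3.symm

lemma dot_combo {p : ℕ} (C : Matrix (Fin 2) (Fin p) ℝ) (δ : Fin p → ℝ) (u : Fin 2 → ℝ) :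
    ∑ i, u i * (∑ q, δ q • (fun i' : Fin 2 => C i' q)) i
      = ∑ q, δ q * ∑ i, u i * C i q := by
  have h1 : ∀ i, (∑ q, δ q • (fun i' : Fin 2 => C i' q)) i = ∑ q, δ q * C i q := by
    intro i
    rw [Finset.sum_apply]
    exact Finset.sum_congr rfl fun q _ => rfl
  simp only [h1]
  calc ∑ i, u i * ∑ q, δ q * C i q
      = ∑ i, ∑ q, u i * (δ q * C i q) := Finset.sum_congr rfl fun i _ => Finset.mul_sum _ _ _
    _ = ∑ q, ∑ i, u i * (δ q * C i q) := Finset.sum_comm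
    _ = ∑ q, δ q * ∑ i, u i * C i q := by
        refine Finset.sum_congr rfl fun q _ => ?_
        rw [Finset.mul_sum]
        exact Finset.sum_congr rfl fun i _ => by ring

lemma zsub_support {n m : ℕ} (A : Matrix (Fin 2) (Fin n) ℝ) (B : Matrix (Fin 2) (Fin m) ℝ)
    (hzsub : zonotope B ⊆ zonotope A) (u : Fin 2 → ℝ) :
    ∑ k, max (∑ i, u i * B i k) 0 ≤ ∑ j, max (∑ i, u i * A i j) 0 := by
  classical
  set δ : Fin m → ℝ := fun k => if 0 ≤ ∑ i, u i * B i k then 1 else 0 with hδ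
  have hδmem : ∀ k, δ k ∈ Set.Icc (0:ℝ) 1 := by
    intro k; rw [hδ]; dsimp only; split_ifs <;> simp
  have hzmem : (∑ k, δ k • (fun i : Fin 2 => B i k)) ∈ zonotope B := ⟨δ, hδmem, rfl⟩
  obtain ⟨ε, hεmem, hεeq⟩ := hzsub hzmem
  have hB : ∑ i, u i * (∑ k, δ k • (fun i' : Fin 2 => B i' k)) i
      = ∑ k, max (∑ i, u i * B i k) 0 := by
    rw [dot_combo]
    refine Finset.sum_congr rfl fun k _ => ?_
    rw [hδ]
    dsimp only
    split_ifs with h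
    · rw [one_mul, max_eq_left h]
    · rw [zero_mul, max_eq_right (le_of_not_ge h)]
  have hA : ∑ i, u i * (∑ k, δ k • (fun i' : Fin 2 => B i' k)) i
      ≤ ∑ j, max (∑ i, u i * A i j) 0 := by
    rw [hεeq, dot_combo]
    refine Finset.sum_le_sum fun j _ => ?_
    obtain ⟨h0, h1⟩ := hεmem j
    rcases le_total (∑ i, u i * A i j) 0 with h | h
    · exact le_trans (mul_nonpos_of_nonneg_of_nonpos h0 h) (le_max_right _ _)
    · calc ε j * ∑ i, u i * A i j ≤ 1 * ∑ i, u i * A i j :=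
          mul_le_mul_of_nonneg_right h1 h
        _ = ∑ i, u i * A i j := one_mul _
        _ ≤ max (∑ i, u i * A i j) 0 := le_max_left _ _
  rw [← hB]
  exact hA

theorem majorization_iff_zonotope_subset
    (n m : ℕ) (A : Matrix (Fin 2) (Fin n) ℝ) (B : Matrix (Fin 2) (Fin m) ℝ)
    (hA : RowStochastic A) (hB : RowStochastic B) :
    (∃ M : Matrix (Fin n) (Fin m) ℝ, RowStochastic M ∧ A * M = B) ↔
      zonotope B ⊆ zonotope A := by
  classical
  constructor
  · -- easy direction
    rintro ⟨M, hM, hAM⟩ z ⟨ε, hε, hz⟩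
    refine ⟨fun j => ∑ k, M j k * ε k, fun j => ⟨?_, ?_⟩, ?_⟩
    · exact Finset.sum_nonneg fun k _ => mul_nonneg (hM.1 j k) (hε k).1
    · calc ∑ k, M j k * ε k ≤ ∑ k, M j k * 1 :=
          Finset.sum_le_sum fun k _ => mul_le_mul_of_nonneg_left (hε k).2 (hM.1 j k)
        _ = 1 := by simpa using hM.2 j
    · funext i
      have hzi : z i = ∑ k, ε k * B i k := by
        rw [hz, Finset.sum_apply]
        exact Finset.sum_congr rfl fun k _ => rfl
      have hBik : ∀ k, B i k = ∑ j, A i j * M j k := by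
        intro k; rw [← hAM]; rfl
      rw [Finset.sum_apply]
      simp only [Pi.smul_apply, smul_eq_mul]
      rw [hzi]
      calc ∑ k, ε k * B i k = ∑ k, ∑ j, ε k * (A i j * M j k) := by
            refine Finset.sum_congr rfl fun k _ => ?_
            rw [hBik k, Finset.mul_sum]
        _ = ∑ j, ∑ k, ε k * (A i j * M j k) := Finset.sum_comm
        _ = ∑ j, (∑ k, M j k * ε k) * A i j := by
            refine Finset.sum_congr rfl fun j _ => ?_
            rw [Finset.sum_mul]
            exact Finset.sum_congr rfl fun k _ => by ring
  · -- hard direction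
    intro hzsub
    -- dispatch degenerate cases
    rcases Nat.eq_zero_or_pos n with hn | hn
    · exfalso
      have := hA.2 0
      subst hn
      simpa using this
    rcases Nat.eq_zero_or_pos m with hm | hm
    · exfalso
      have := hB.2 0
      subst hm
      simpa using this
    have hne : (Finset.univ : Finset (Fin m)).Nonempty := ⟨⟨0, hm⟩, Finset.mem_univ _⟩
    set K : Set (Fin n → Fin m → ℝ) :=
      {M | (∀ j k, 0 ≤ M j k) ∧ ∀ j, ∑ k, M j k = 1} with hKdef
    set Φ : (Fin n → Fin m → ℝ) → (Fin 2 → Fin m → ℝ) :=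
      fun M i k => ∑ j, A i j * M j k with hΦdef
    set S : Set (Fin 2 → Fin m → ℝ) := Φ '' K with hSdef
    -- compactness of K
    have hKsub : K ⊆ Set.Icc (0 : Fin n → Fin m → ℝ) 1 := by
      rintro M ⟨h0, h1⟩
      constructor
      · intro j; intro k; exact h0 j k
      · intro j; intro k
        calc M j k ≤ ∑ k', M j k' :=
            Finset.single_le_sum (fun k' _ => h0 j k') (Finset.mem_univ k)
          _ = 1 := h1 j
    have hKclosed : IsClosed K := by
      have hrw : K = (⋂ (j : Fin n) (k : Fin m), {M : Fin n → Fin m → ℝ | 0 ≤ M j k})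
          ∩ ⋂ (j : Fin n), {M : Fin n → Fin m → ℝ | ∑ k, M j k = 1} := by
        ext M
        simp only [hKdef, Set.mem_setOf_eq, Set.mem_inter_iff, Set.mem_iInter]
      rw [hrw]
      refine IsClosed.inter ?_ ?_
      · exact isClosed_iInter fun j => isClosed_iInter fun k =>
          isClosed_le continuous_const ((continuous_apply k).comp (continuous_apply j))
      · exact isClosed_iInter fun j => isClosed_eq
          (continuous_finset_sum _ fun k _ => (continuous_apply k).comp (continuous_apply j))
          continuous_const
    have hKcpt : IsCompact K := (isCompact_Icc).of_isClosed_subset hKclosed hKsub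
    have hΦcont : Continuous Φ := by
      refine continuous_pi fun i => continuous_pi fun k => ?_
      exact continuous_finset_sum _ fun j _ =>
        continuous_const.mul ((continuous_apply k).comp (continuous_apply j))
    have hScpt : IsCompact S := hKcpt.image hΦcont
    have hSconv : Convex ℝ S := by
      rintro x ⟨M₁, hM₁, rfl⟩ y ⟨M₂, hM₂, rfl⟩ p q hp hq hpq
      refine ⟨p • M₁ + q • M₂, ⟨?_, ?_⟩, ?_⟩
      · intro j k
        simp only [Pi.add_apply, Pi.smul_apply, smul_eq_mul]
        exact add_nonneg (mul_nonneg hp (hM₁.1 j k)) (mul_nonneg hq (hM₂.1 j k))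
      · intro j
        simp only [Pi.add_apply, Pi.smul_apply, smul_eq_mul]
        rw [Finset.sum_add_distrib, ← Finset.mul_sum, ← Finset.mul_sum, hM₁.2 j, hM₂.2 j]
        simpa using hpq
      · funext i k
        simp only [hΦdef, Pi.add_apply, Pi.smul_apply, smul_eq_mul]
        calc ∑ x, A i x * (p * M₁ x k + q * M₂ x k)
            = ∑ x, (p * (A i x * M₁ x k) + q * (A i x * M₂ x k)) :=
              Finset.sum_congr rfl fun x _ => by ring
          _ = p * ∑ j, A i j * M₁ j k + q * ∑ j, A i j * M₂ j k := by
              rw [Finset.sum_add_distrib, Finset.mul_sum, Finset.mul_sum]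
    -- B as element of the pi type
    set B' : Fin 2 → Fin m → ℝ := fun i k => B i k with hB'def
    have hBmem : B' ∈ S := by
      by_contra hBS
      obtain ⟨f, u, hfu, huB⟩ :=
        geometric_hahn_banach_closed_point hSconv hScpt.isClosed hBS
      -- extract the coefficient vectors of f
      set y : Fin m → Fin 2 → ℝ :=
        fun k i => f (Pi.single i (Pi.single k (1:ℝ))) with hydef
      have hf : ∀ X : Fin 2 → Fin m → ℝ, f X = ∑ k, ∑ i, X i k * y k i := by
        intro X
        have hXdecomp : X = ∑ i, ∑ k, X i k •
            (Pi.single i (Pi.single k (1:ℝ)) : Fin 2 → Fin m → ℝ) := by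
          funext i' k'
          fin_cases i' <;>
            simp [Finset.sum_apply, Pi.smul_apply, smul_eq_mul, Pi.single_apply,
              mul_ite, mul_one, mul_zero, Finset.sum_ite_eq, Finset.sum_ite_eq',
              Fin.sum_univ_two]
        conv_lhs => rw [hXdecomp]
        rw [map_sum]
        rw [Finset.sum_comm]
        refine Finset.sum_congr rfl fun k _ => ?_
        rw [map_sum]
        refine Finset.sum_congr rfl fun i _ => ?_
        rw [_root_.map_smul, smul_eq_mul, hydef]
      -- the argmax stochastic matrix
      have hchoice : ∀ j : Fin n, ∃ k : Fin m,
          (Finset.univ.sup' hne fun κ => ∑ i, y κ i * A i j) = ∑ i, y k i * A i j := by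
        intro j
        obtain ⟨k, -, hk⟩ := Finset.exists_mem_eq_sup' hne (fun κ => ∑ i, y κ i * A i j)
        exact ⟨k, hk⟩
      choose κsel hκsel using hchoice
      set M₀ : Fin n → Fin m → ℝ := fun j k => if k = κsel j then 1 else 0 with hM₀def
      have hM₀K : M₀ ∈ K := by
        constructor
        · intro j k; rw [hM₀def]; dsimp only; split_ifs <;> norm_num
        · intro j; rw [hM₀def]; simp
      have hΦM₀ : f (Φ M₀) = ∑ j, Finset.univ.sup' hne fun κ => ∑ i, y κ i * A i j := by
        rw [hf (Φ M₀)]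
        have h1 : ∀ k i, Φ M₀ i k = ∑ j, (if k = κsel j then A i j else 0) := by
          intro k i
          refine Finset.sum_congr rfl fun j _ => ?_
          rw [hM₀def]; dsimp only; split_ifs <;> simp
        calc ∑ k, ∑ i, Φ M₀ i k * y k i
            = ∑ k, ∑ i, ∑ j, (if k = κsel j then A i j * y k i else 0) := by
              refine Finset.sum_congr rfl fun k _ => Finset.sum_congr rfl fun i _ => ?_
              rw [h1, Finset.sum_mul]
              refine Finset.sum_congr rfl fun j _ => ?_
              split_ifs <;> simp
          _ = ∑ k, ∑ j, ∑ i, (if k = κsel j then A i j * y k i else 0) :=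
              Finset.sum_congr rfl fun k _ => Finset.sum_comm
          _ = ∑ j, ∑ k, ∑ i, (if k = κsel j then A i j * y k i else 0) := Finset.sum_comm
          _ = ∑ j, ∑ i, ∑ k, (if k = κsel j then A i j * y k i else 0) :=
              Finset.sum_congr rfl fun j _ => Finset.sum_comm
          _ = ∑ j, ∑ i, A i j * y (κsel j) i := by
              refine Finset.sum_congr rfl fun j _ => Finset.sum_congr rfl fun i _ => ?_
              simp
          _ = ∑ j, Finset.univ.sup' hne fun κ => ∑ i, y κ i * A i j := by
              refine Finset.sum_congr rfl fun j _ => ?_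
              rw [hκsel j]
              exact Finset.sum_congr rfl fun i _ => by ring
      have hkey : f B' ≤ f (Φ M₀) := by
        rw [hf B', hΦM₀]
        have : ∑ k, ∑ i, B' i k * y k i = ∑ k, ∑ i, y k i * B i k := by
          refine Finset.sum_congr rfl fun k _ => Finset.sum_congr rfl fun i _ => ?_
          rw [hB'def]; ring
        rw [this]
        exact key_ineq A B hA.1 hA.2 hB.1 hB.2 (zsub_support A B hzsub) y hne
      have hlt : f (Φ M₀) < u := hfu (Φ M₀) ⟨M₀, hM₀K, rfl⟩
      linarith
    obtain ⟨M, hMK, hMeq⟩ := hBmem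
    refine ⟨Matrix.of M, ⟨fun j k => hMK.1 j k, fun j => hMK.2 j⟩, ?_⟩
    ext i k
    rw [Matrix.mul_apply]
    have : Φ M i k = B' i k := by rw [hMeq]
    exact this
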